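/- Let φ: ℝ^d → ℝ be a nonnegative measurable function with ∫_{ℝ^d} φ(x) dx = 1. Suppose λ₁, λ₂ ∈ (0,1) and μ₁, μ₂ ∈ ℝ^d are such that (1−λ₁)φ(x) + λ₁φ(x−μ₁) = (1−λ₂)φ(x) + λ₂φ(x−μ₂) for Lebesgue-almost every x ∈ ℝ^d, and that μ₁ ≠ 0. Then μ₂ = μ₁ and λ₂ = λ₁ (identifiability of the two-component contamination mixture model). -/

import Mathlib

open MeasureTheory ENNReal

noncomputable section

open scoped FourierTransform RealInnerProductSpace Real

lemma aux_scalar_step (l₁ l₂ A B : ℝ) (hl₁ : l₁ ≠ 0) (hA : Real.cos A ≠ 1)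
    (h : (1 - (l₁:ℂ)) + l₁ * Complex.exp (A * Complex.I)
       = (1 - (l₂:ℂ)) + l₂ * Complex.exp (B * Complex.I)) : l₂ = l₁ := by
  have hre := congrArg Complex.re h
  have him := congrArg Complex.im h
  simp only [Complex.add_re, Complex.add_im, Complex.sub_re, Complex.sub_im, Complex.one_re,
    Complex.one_im, Complex.ofReal_re, Complex.ofReal_im, Complex.mul_re, Complex.mul_im,
    Complex.exp_ofReal_mul_I_re, Complex.exp_ofReal_mul_I_im, zero_mul, mul_zero, sub_zero,
    add_zero, zero_add, zero_sub, neg_zero] at hre him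
  have pythA := Real.sin_sq_add_cos_sq A
  have pythB := Real.sin_sq_add_cos_sq B
  have h1 : l₂ * Real.cos B = (l₂ - l₁) + l₁ * Real.cos A := by linarith
  have h2 : l₂ * Real.sin B = l₁ * Real.sin A := by linarith
  have key : 2 * (l₂ - l₁) * l₁ * (Real.cos A - 1) = 0 := by
    linear_combination (-(l₂ * Real.cos B + (l₂ - l₁) + l₁ * Real.cos A)) * h1 +
      (-(l₂ * Real.sin B + l₁ * Real.sin A)) * h2 + (l₂^2) * pythB + (-(l₁^2)) * pythA
  have hA' : Real.cos A - 1 ≠ 0 := sub_ne_zero.mpr hA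
  rcases mul_eq_zero.mp key with h' | h'
  · rcases mul_eq_zero.mp h' with h'' | h''
    · rcases mul_eq_zero.mp h'' with h''' | h'''
      · norm_num at h'''
      · linarith [sub_eq_zero.mp h''']
    · exact absurd h'' hl₁
  · exact absurd h' hA'

lemma aux_exp_eq (A B : ℝ) (h : Complex.exp ((A:ℂ) * Complex.I) = Complex.exp ((B:ℂ) * Complex.I)) :
    ∃ n : ℤ, A = B + n * (2 * π) := by
  obtain ⟨n, hn⟩ := Complex.exp_eq_exp_iff_exists_int.mp h
  refine ⟨n, ?_⟩
  have h2 : (A:ℂ) * Complex.I = ((B + n * (2*π) : ℝ) : ℂ) * Complex.I := by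
    rw [hn]; push_cast; ring
  have h3 : (A:ℂ) = ((B + n * (2*π) : ℝ) : ℂ) := mul_right_cancel₀ Complex.I_ne_zero h2
  exact_mod_cast h3

/-- Identifiability of the two-component contamination mixture model. -/
theorem contamination_mixture_identifiable
    (d : ℕ) (φ : EuclideanSpace ℝ (Fin d) → ℝ)
    (hmeas : Measurable φ) (hnonneg : ∀ x, 0 ≤ φ x)
    (hint : ∫ x, φ x = 1)
    (l₁ l₂ : ℝ) (μ₁ μ₂ : EuclideanSpace ℝ (Fin d))
    (hl₁ : l₁ ∈ Set.Ioo (0 : ℝ) 1) (hl₂ : l₂ ∈ Set.Ioo (0 : ℝ) 1)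
    (hμ₁ : μ₁ ≠ 0)
    (heq : ∀ᵐ x ∂(volume : Measure (EuclideanSpace ℝ (Fin d))),
      (1 - l₁) * φ x + l₁ * φ (x - μ₁) = (1 - l₂) * φ x + l₂ * φ (x - μ₂)) :
    μ₂ = μ₁ ∧ l₂ = l₁ := by
  have hφi : Integrable φ (volume : Measure (EuclideanSpace ℝ (Fin d))) := by
    by_contra h
    rw [integral_undef h] at hint
    norm_num at hint
  set f : EuclideanSpace ℝ (Fin d) → ℂ := fun x => (φ x : ℂ) with hf
  have hfi : Integrable f (volume : Measure (EuclideanSpace ℝ (Fin d))) := hφi.ofReal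
  have hFeq : ∀ w : EuclideanSpace ℝ (Fin d),
      𝓕 f w = ∫ v, (𝐞 (-⟪v, w⟫) : ℂ) * f v := by
    intro w
    rw [Real.fourier_eq]
    simp only [Circle.smul_def, smul_eq_mul]
  -- translation formula
  have hT : ∀ (μ w : EuclideanSpace ℝ (Fin d)), (∫ v, (𝐞 (-⟪v, w⟫) : ℂ) * f (v - μ))
      = (𝐞 (-⟪μ, w⟫) : ℂ) * 𝓕 f w := by
    intro μ w
    have step1 : (∫ v, (𝐞 (-⟪v, w⟫) : ℂ) * f (v - μ))
        = ∫ v, (𝐞 (-⟪v + μ, w⟫) : ℂ) * f (v + μ - μ) :=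
      (integral_add_right_eq_self
        (fun v : EuclideanSpace ℝ (Fin d) => (𝐞 (-⟪v, w⟫) : ℂ) * f (v - μ)) μ).symm
    rw [step1]
    have step2 : ∀ v : EuclideanSpace ℝ (Fin d), (𝐞 (-⟪v + μ, w⟫) : ℂ) * f (v + μ - μ)
        = (𝐞 (-⟪μ, w⟫) : ℂ) * ((𝐞 (-⟪v, w⟫) : ℂ) * f v) := by
      intro v
      rw [add_sub_cancel_right, inner_add_left, neg_add, AddChar.map_add_eq_mul]
      push_cast
      ring
    simp_rw [step2]
    rw [integral_const_mul, hFeq w]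
  -- splitting formula
  have hsplit : ∀ (l : ℝ) (μ w : EuclideanSpace ℝ (Fin d)),
      (∫ v, (𝐞 (-⟪v, w⟫) : ℂ) * ((1 - (l:ℂ)) * f v + (l:ℂ) * f (v - μ)))
      = ((1 - (l:ℂ)) + (l:ℂ) * (𝐞 (-⟪μ, w⟫) : ℂ)) * 𝓕 f w := by
    intro l μ w
    have int1 : Integrable (fun v : EuclideanSpace ℝ (Fin d) => (𝐞 (-⟪v, w⟫) : ℂ) * f v)
        volume := by
      simpa [Circle.smul_def, smul_eq_mul] using (Real.fourierIntegral_convergent_iff (f := f) w).mpr hfi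
    have hfiμ : Integrable (fun v : EuclideanSpace ℝ (Fin d) => f (v - μ)) volume :=
      hfi.comp_sub_right μ
    have int2 : Integrable (fun v : EuclideanSpace ℝ (Fin d) => (𝐞 (-⟪v, w⟫) : ℂ) * f (v - μ))
        volume := by
      simpa [Circle.smul_def, smul_eq_mul] using
        (Real.fourierIntegral_convergent_iff
          (f := fun v : EuclideanSpace ℝ (Fin d) => f (v - μ)) w).mpr hfiμ
    have expand : ∀ v : EuclideanSpace ℝ (Fin d),
        (𝐞 (-⟪v, w⟫) : ℂ) * ((1 - (l:ℂ)) * f v + (l:ℂ) * f (v - μ))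
        = (1 - (l:ℂ)) * ((𝐞 (-⟪v, w⟫) : ℂ) * f v)
          + (l:ℂ) * ((𝐞 (-⟪v, w⟫) : ℂ) * f (v - μ)) := by
      intro v; ring
    simp_rw [expand]
    rw [integral_add (int1.const_mul _) (int2.const_mul _), integral_const_mul, integral_const_mul,
      hT μ w, hFeq w]
    ring
  -- main functional equation
  have hmain : ∀ w : EuclideanSpace ℝ (Fin d),
      ((1 - (l₁:ℂ)) + (l₁:ℂ) * (𝐞 (-⟪μ₁, w⟫) : ℂ)) * 𝓕 f w
      = ((1 - (l₂:ℂ)) + (l₂:ℂ) * (𝐞 (-⟪μ₂, w⟫) : ℂ)) * 𝓕 f w := by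
    intro w
    rw [← hsplit l₁ μ₁ w, ← hsplit l₂ μ₂ w]
    apply integral_congr_ae
    filter_upwards [heq] with x hx
    congr 1
    simp only [hf]
    exact_mod_cast congrArg (fun r : ℝ => (r : ℂ)) hx
  -- value at 0
  have hF0 : 𝓕 f 0 = 1 := by
    rw [Real.fourier_eq]
    simp only [inner_zero_right, neg_zero, AddChar.map_zero_eq_one, one_smul]
    have : (∫ v, f v) = ((∫ x, φ x : ℝ) : ℂ) := by
      simp only [hf]
      exact integral_ofReal
    rw [this, hint]
    norm_num
  -- continuity
  have hFc : Continuous (𝓕 f) :=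
    VectorFourier.fourierIntegral_continuous (L := innerₗ _) Real.continuous_fourierChar
      (by exact continuous_inner) hfi
  have hev : ∀ᶠ w in nhds (0 : EuclideanSpace ℝ (Fin d)), 𝓕 f w ≠ 0 :=
    hFc.continuousAt.eventually_ne (by rw [hF0]; norm_num)
  obtain ⟨ε, hε, hball⟩ := Metric.eventually_nhds_iff_ball.mp hev
  have hsc : ∀ w : EuclideanSpace ℝ (Fin d), ‖w‖ < ε →
      (1 - (l₁:ℂ)) + (l₁:ℂ) * (𝐞 (-⟪μ₁, w⟫) : ℂ)
      = (1 - (l₂:ℂ)) + (l₂:ℂ) * (𝐞 (-⟪μ₂, w⟫) : ℂ) := by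
    intro w hw
    refine mul_right_cancel₀ (hball w ?_) (hmain w)
    simpa [Metric.mem_ball, dist_zero_right] using hw
  -- choose good scaling parameter for a nonzero vector v
  have hchoose : ∀ v : EuclideanSpace ℝ (Fin d), v ≠ 0 →
      ∃ t : ℝ, 0 < t ∧ ‖t • v‖ < ε ∧ 0 < t * ‖v‖^2 ∧ t * ‖v‖^2 < 1 := by
    intro v hv
    have hnv : 0 < ‖v‖ := norm_pos_iff.mpr hv
    refine ⟨min (ε / (2 * ‖v‖)) (1 / (2 * ‖v‖^2)), ?_, ?_, ?_, ?_⟩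
    · positivity
    · rw [norm_smul]
      have h2 : (0:ℝ) < min (ε / (2 * ‖v‖)) (1 / (2 * ‖v‖^2)) := by positivity
      calc |min (ε / (2 * ‖v‖)) (1 / (2 * ‖v‖^2))| * ‖v‖
          = min (ε / (2 * ‖v‖)) (1 / (2 * ‖v‖^2)) * ‖v‖ := by rw [abs_of_pos h2]
        _ ≤ (ε / (2 * ‖v‖)) * ‖v‖ := by gcongr; exact min_le_left _ _
        _ = ε / 2 := by field_simp
        _ < ε := by linarith
    · positivity
    · calc min (ε / (2 * ‖v‖)) (1 / (2 * ‖v‖^2)) * ‖v‖^2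
          ≤ (1 / (2 * ‖v‖^2)) * ‖v‖^2 := by gcongr; exact min_le_right _ _
        _ = 1 / 2 := by field_simp
        _ < 1 := by norm_num
  -- Step A : l₂ = l₁
  have hll : l₂ = l₁ := by
    obtain ⟨t, ht, htn, htp, htl⟩ := hchoose μ₁ hμ₁
    set w := t • μ₁ with hw
    have hinner : ⟪μ₁, w⟫ = t * ‖μ₁‖^2 := by
      rw [hw, real_inner_smul_right, real_inner_self_eq_norm_sq]
    have h := hsc w htn
    rw [Real.fourierChar_apply, Real.fourierChar_apply] at h
    have hA : Real.cos (2 * π * -⟪μ₁, w⟫) ≠ 1 := by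
      rw [hinner]
      have h2π : (0:ℝ) < 2 * π := by positivity
      intro hc
      rw [Real.cos_eq_one_iff_of_lt_of_lt (by nlinarith) (by nlinarith)] at hc
      nlinarith
    exact aux_scalar_step l₁ l₂ _ _ (ne_of_gt hl₁.1) hA h
  refine ⟨?_, hll⟩
  -- Step B : μ₂ = μ₁
  by_contra hμne
  have hδ : μ₂ - μ₁ ≠ 0 := sub_ne_zero.mpr hμne
  obtain ⟨t, ht, htn, htp, htl⟩ := hchoose (μ₂ - μ₁) hδ
  set w := t • (μ₂ - μ₁) with hw
  have h := hsc w htn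
  rw [hll] at h
  have hexp : Complex.exp ((↑(2 * π * -⟪μ₁, w⟫) : ℂ) * Complex.I)
      = Complex.exp ((↑(2 * π * -⟪μ₂, w⟫) : ℂ) * Complex.I) := by
    rw [Real.fourierChar_apply, Real.fourierChar_apply] at h
    have hl₁' : (l₁ : ℂ) ≠ 0 := by exact_mod_cast ne_of_gt hl₁.1
    exact mul_left_cancel₀ hl₁' (add_left_cancel h)
  obtain ⟨n, hn⟩ := aux_exp_eq _ _ hexp
  have hinner : ⟪μ₂, w⟫ - ⟪μ₁, w⟫ = t * ‖μ₂ - μ₁‖^2 := by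
    rw [← inner_sub_left, hw, real_inner_smul_right, real_inner_self_eq_norm_sq]
  have hπ : (0:ℝ) < π := Real.pi_pos
  have hn' : (n : ℝ) = t * ‖μ₂ - μ₁‖^2 := by
    have h2 : 2 * π * (⟪μ₂, w⟫ - ⟪μ₁, w⟫) = (n:ℝ) * (2 * π) := by linarith
    rw [hinner] at h2
    have h2π : (2 * π : ℝ) ≠ 0 := by positivity
    exact (mul_right_cancel₀ h2π (by linarith : (n:ℝ) * (2*π) = (t * ‖μ₂ - μ₁‖^2) * (2*π)))
  have h0 : (0:ℝ) < (n:ℝ) := by rw [hn']; exact htp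
  have h1 : (n:ℝ) < 1 := by rw [hn']; exact htl
  have hge : (1:ℤ) ≤ n := by exact_mod_cast h0
  have : (1:ℝ) ≤ (n:ℝ) := by exact_mod_cast hge
  linarith
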